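/- Suppose $g - d + r = 1$ and set $\rho = g - r - 1 \geq 0$. Then in the sum $\frac{1}{\rho!}\sum_{|\gamma| = \rho} f^\gamma \cdot \prod_{i=1}^{r+1}(\gamma_i - i + 1)_{\gamma_i} \cdot f^{\lambda + \gamma}$ over partitions $\gamma$ of $\rho$ with at most $r+1$ parts, where $\lambda = (1^{r+1})$, every term with $\gamma_2 \geq 1$ vanishes (since $(\gamma_i - i + 1)_{\gamma_i} = 0$ for $i \geq 2$ and $\gamma_i \geq 1$), and the whole sum equals $\binom{r + \rho}{\rho}$. -/

import Mathlib

open Finset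

/-- Reciprocal factorial: `1/m!` for `m ≥ 0`, and `0` for `m < 0`. -/
noncomputable def rfac (m : ℤ) : ℚ :=
  if m < 0 then 0 else ((m.toNat).factorial : ℚ)⁻¹

/-- Falling factorial `(x)_k = x(x-1)⋯(x-k+1)` in `ℚ`. -/
noncomputable def ffac (x : ℚ) (k : ℕ) : ℚ := ∏ m ∈ Finset.range k, (x - m)

/-- The number of standard Young tableaux of shape `ν`, via the Aitken determinant
formula `f^ν = |ν|! · det(1/(ν_i + j - i)!)`. -/
noncomputable def fSYT {t : ℕ} (nu : Fin t → ℕ) : ℚ :=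
  ((∑ i, nu i).factorial : ℚ) *
    Matrix.det (fun i j : Fin t => rfac ((nu i : ℤ) + (j.val : ℤ) - (i.val : ℤ)))

lemma rfac_neg {m : ℤ} (h : m < 0) : rfac m = 0 := if_pos h

lemma rfac_ofNat (n : ℕ) : rfac n = ((n.factorial : ℚ))⁻¹ := by
  simp [rfac, show ¬ ((n:ℤ) < 0) by exact_mod_cast Nat.not_lt_zero n ∘ Int.ofNat_lt.mp]

lemma rfac_zero : rfac 0 = 1 := by simpa using rfac_ofNat 0

-- upper triangular rfac matrix
lemma det_rfac_triangular (m : ℕ) :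
    Matrix.det (fun i j : Fin m => rfac ((j.val : ℤ) - (i.val : ℤ))) = 1 := by
  rw [Matrix.det_of_upperTriangular (M := fun i j : Fin m => rfac ((j.val : ℤ) - (i.val : ℤ)))]
  · simp [rfac_zero]
  · intro i j hij
    exact rfac_neg (by simp only [id] at hij; omega)

noncomputable def Mhook (n ρ : ℕ) : Matrix (Fin (n+1)) (Fin (n+1)) ℚ :=
  fun i j => rfac ((if i.val = 0 then (ρ:ℤ)+1 else 1) + (j.val : ℤ) - (i.val : ℤ))

lemma det_Mhook (n : ℕ) : ∀ ρ : ℕ, (Mhook n ρ).det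
    = ((ρ+n).choose n : ℚ) / ((ρ+n+1).factorial : ℚ) := by
  induction n with
  | zero =>
    intro ρ
    rw [show (Mhook 0 ρ).det = Mhook 0 ρ 0 0 from Matrix.det_fin_one _]
    have h : ((ρ:ℤ)+1+(0:ℕ)-(0:ℕ)) = ((ρ+1 : ℕ) : ℤ) := by push_cast; ring
    show rfac _ = _
    norm_num [Mhook]
    rw [show ((ρ:ℤ)+1) = ((ρ+1:ℕ):ℤ) by push_cast; ring, rfac_ofNat]
  | succ n ih =>
    intro ρ
    rw [Matrix.det_succ_column_zero]
    rw [Fin.sum_univ_succ, Fin.sum_univ_succ]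
    have hz : ∀ i : Fin n, (-1 : ℚ) ^ ((i.succ.succ : Fin (n+2)) : ℕ) *
        Mhook (n+1) ρ i.succ.succ 0 *
        Matrix.det ((Mhook (n+1) ρ).submatrix i.succ.succ.succAbove Fin.succ) = 0 := by
      intro i
      have : Mhook (n+1) ρ i.succ.succ 0 = 0 := by
        apply rfac_neg
        simp only [Mhook, Fin.val_succ, Fin.val_zero]
        have : (i:ℤ) + 1 + 1 ≠ 0 := by omega
        rw [if_neg (by omega)]
        omega
      rw [this]; ring
    rw [Finset.sum_eq_zero fun i _ => hz i, add_zero]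
    have h0 : ((Mhook (n+1) ρ).submatrix (0 : Fin (n+2)).succAbove Fin.succ) = Mhook n 0 := by
      ext i j
      simp only [Matrix.submatrix_apply, Fin.succAbove_zero, Mhook, Fin.val_succ]
      rw [if_neg (by omega)]
      by_cases h : i.val = 0
      · rw [if_pos h, h]; congr 1; push_cast; ring
      · rw [if_neg h]; congr 1; push_cast; ring
    have h1 : ((Mhook (n+1) ρ).submatrix (1 : Fin (n+2)).succAbove Fin.succ) = Mhook n (ρ+1) := by
      ext i j
      simp only [Matrix.submatrix_apply, Mhook, Fin.val_succ]
      rcases Fin.eq_zero_or_eq_succ i with h | ⟨k, rfl⟩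
      · subst h
        rw [Fin.succAbove_of_castSucc_lt _ _ (by simp)]
        simp only [Fin.coe_castSucc, Fin.val_zero, if_pos rfl]
        congr 1; push_cast; ring
      · rw [Fin.succAbove_of_le_castSucc _ _ (by
          simp [Fin.le_def])]
        simp only [Fin.val_succ]
        rw [if_neg (by omega), if_neg (by omega)]
        congr 1; push_cast; ring
    simp only [Fin.succ_zero_eq_one]
    rw [h0, h1, ih 0, ih (ρ+1)]
    have e00 : Mhook (n+1) ρ 0 0 = ((ρ+1).factorial : ℚ)⁻¹ := by
      have h : ((ρ:ℤ)+1) = ((ρ+1 : ℕ) : ℤ) := by push_cast; ring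
      show rfac _ = _
      norm_num [Mhook]
      rw [h, rfac_ofNat]
    have e10 : Mhook (n+1) ρ 1 0 = 1 := by
      simp [Mhook, rfac_zero]
    rw [e00, e10]
    have hnat : ((ρ+n+1).choose (n+1) + (ρ+n+1).choose n) * (n+1).factorial * (ρ+1).factorial
        = (ρ+n+2).factorial := by
      have h2 := Nat.choose_mul_factorial_mul_factorial (show n+1 ≤ ρ+n+2 by omega)
      rw [show ρ+n+2-(n+1) = ρ+1 by omega] at h2
      rw [← h2, show ρ+n+2 = (ρ+n+1)+1 by omega, Nat.choose_succ_succ (ρ+n+1) n]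
      ring
    have hq : (((ρ+n+1).choose (n+1) : ℚ) + ((ρ+n+1).choose n : ℚ))
        * ((n+1).factorial : ℚ) * ((ρ+1).factorial : ℚ) = ((ρ+n+2).factorial : ℚ) := by
      exact_mod_cast hnat
    rw [show 0+n = n by omega, show ρ+1+n = ρ+n+1 by omega, show ρ+(n+1) = ρ+n+1 by omega,
      show ρ+n+1+1 = ρ+n+2 by omega, Nat.choose_self]
    have f1 : ((ρ+1).factorial : ℚ) ≠ 0 := Nat.cast_ne_zero.2 (Nat.factorial_ne_zero _)
    have f2 : ((n+1).factorial : ℚ) ≠ 0 := Nat.cast_ne_zero.2 (Nat.factorial_ne_zero _)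
    have f3 : ((ρ+n+2).factorial : ℚ) ≠ 0 := Nat.cast_ne_zero.2 (Nat.factorial_ne_zero _)
    field_simp
    simp only [Fin.val_zero, Fin.val_one, pow_zero, pow_one]
    linear_combination (-1 : ℚ) * hq

lemma ffac_self (ρ : ℕ) : (∏ m ∈ Finset.range ρ, ((ρ:ℚ) - m)) = (ρ.factorial : ℚ) := by
  rw [← Finset.prod_range_reflect]
  have : ∀ m ∈ Finset.range ρ, ((ρ:ℚ) - (ρ - 1 - m : ℕ)) = ((m+1 : ℕ) : ℚ) := by
    intro m hm
    rw [Finset.mem_range] at hm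
    have : (ρ - 1 - m : ℕ) = ρ - (m+1) := by omega
    rw [this, Nat.cast_sub (by omega)]
    push_cast; ring
  rw [Finset.prod_congr rfl this, ← Nat.cast_prod, Finset.prod_range_add_one_eq_factorial]

lemma det_Mrow (r ρ : ℕ) :
    Matrix.det (fun i j : Fin (r+1) =>
      rfac (((if i = (0 : Fin (r+1)) then ρ else 0 : ℕ) : ℤ) + (j.val : ℤ) - (i.val : ℤ)))
    = ((ρ.factorial : ℚ))⁻¹ := by
  rw [Matrix.det_succ_column_zero (fun i j : Fin (r+1) =>
      rfac (((if i = (0 : Fin (r+1)) then ρ else 0 : ℕ) : ℤ) + (j.val : ℤ) - (i.val : ℤ))), Fin.sum_univ_succ]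
  have hz : ∀ i : Fin r,
      rfac (((if (i.succ : Fin (r+1)) = 0 then ρ else 0 : ℕ) : ℤ) + ((0:Fin (r+1)).val : ℤ)
        - ((i.succ : Fin (r+1)).val : ℤ)) = 0 := by
    intro i
    rw [if_neg (Fin.succ_ne_zero i)]
    exact rfac_neg (by simp [Fin.val_succ]; omega)
  rw [Finset.sum_eq_zero (fun i _ => by rw [hz i, mul_zero, zero_mul]), add_zero]
  have hminor : (Matrix.submatrix (fun i j : Fin (r+1) =>
      rfac (((if i = (0 : Fin (r+1)) then ρ else 0 : ℕ) : ℤ) + (j.val : ℤ) - (i.val : ℤ)))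
      (Fin.succAbove 0) Fin.succ).det = 1 := by
    have he : Matrix.submatrix (fun i j : Fin (r+1) =>
        rfac (((if i = (0 : Fin (r+1)) then ρ else 0 : ℕ) : ℤ) + (j.val : ℤ) - (i.val : ℤ)))
        (Fin.succAbove 0) Fin.succ
        = fun i j : Fin r => rfac ((j.val : ℤ) - (i.val : ℤ)) := by
      funext i j
      simp only [Matrix.submatrix_apply, Fin.succAbove_zero]
      show rfac (((if (Fin.succ i : Fin (r+1)) = 0 then ρ else 0 : ℕ) : ℤ) + ((Fin.succ j : Fin (r+1)).val : ℤ) - ((Fin.succ i : Fin (r+1)).val : ℤ)) = _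
      rw [if_neg (Fin.succ_ne_zero i)]
      congr 1
      push_cast [Fin.val_succ]
      ring
    rw [he]
    exact det_rfac_triangular r
  rw [hminor]
  norm_num [rfac_ofNat]

theorem gdr_one_euler (r rho : ℕ) :
    (∀ ga : Fin (r + 1) → ℕ, Antitone ga → ∑ i, ga i = rho →
      (∃ i : Fin (r + 1), 1 ≤ i.val ∧ 1 ≤ ga i) →
      ∏ i : Fin (r + 1), ffac ((ga i : ℚ) - (i.val : ℚ)) (ga i) = 0) ∧
    (1 / (rho.factorial : ℚ)) *
        ∑ ga ∈ (Finset.Nat.antidiagonalTuple (r + 1) rho).filter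
            (fun ga => Antitone ga),
          fSYT ga * (∏ i : Fin (r + 1), ffac ((ga i : ℚ) - (i.val : ℚ)) (ga i)) *
            fSYT (fun i => 1 + ga i) =
      ((r + rho).choose rho : ℚ) := by
  have part1 : ∀ ga : Fin (r + 1) → ℕ, Antitone ga → ∑ i, ga i = rho →
      (∃ i : Fin (r + 1), 1 ≤ i.val ∧ 1 ≤ ga i) →
      ∏ i : Fin (r + 1), ffac ((ga i : ℚ) - (i.val : ℚ)) (ga i) = 0 := by
    rintro ga hanti _ ⟨i, hi1, hgai⟩
    have hr : 1 < r + 1 := lt_of_le_of_lt hi1 i.isLt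
    set i1 : Fin (r+1) := ⟨1, hr⟩ with hi1def
    have hle : i1 ≤ i := by rw [Fin.le_def]; exact hi1
    have hga1 : 1 ≤ ga i1 := le_trans hgai (hanti hle)
    apply Finset.prod_eq_zero (Finset.mem_univ i1)
    unfold ffac
    apply Finset.prod_eq_zero (Finset.mem_range.2 (show ga i1 - 1 < ga i1 by omega))
    rw [Nat.cast_sub hga1]
    show (ga i1 : ℚ) - ((1:ℕ):ℚ) - _ = 0
    push_cast
    ring
  refine ⟨part1, ?_⟩
  set ga0 : Fin (r+1) → ℕ := fun i => if i = 0 then rho else 0 with hga0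
  have hsum0 : ∑ i, ga0 i = rho := by
    rw [Fin.sum_univ_succ]
    simp [ga0, Fin.succ_ne_zero]
  have hanti0 : Antitone ga0 := by
    intro a b hab
    by_cases hb : b = 0
    · subst hb
      have : a = 0 := Fin.le_zero_iff.mp hab
      subst this
      exact le_refl _
    · simp [ga0, hb]
  have hmem : ga0 ∈ (Finset.Nat.antidiagonalTuple (r+1) rho).filter (fun ga => Antitone ga) := by
    rw [Finset.mem_filter, Finset.Nat.mem_antidiagonalTuple]
    exact ⟨hsum0, hanti0⟩
  rw [Finset.sum_eq_single ga0 (fun b hb hbne => ?_) (fun h => absurd hmem h)]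
  · -- compute the single term
    have hprod : ∏ i : Fin (r+1), ffac ((ga0 i : ℚ) - (i.val : ℚ)) (ga0 i)
        = (rho.factorial : ℚ) := by
      rw [Fin.prod_univ_succ]
      have tail : ∀ i : Fin r, ffac ((ga0 i.succ : ℚ) - ((i.succ : Fin (r+1)).val : ℚ))
          (ga0 i.succ) = 1 := by
        intro i
        have : ga0 i.succ = 0 := by simp [ga0, Fin.succ_ne_zero]
        rw [this]
        simp [ffac]
      rw [Finset.prod_eq_one (fun i _ => tail i), mul_one]
      have h0 : ga0 0 = rho := by simp [ga0]
      rw [h0]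
      show (∏ m ∈ Finset.range rho, ((rho:ℚ) - ((0:Fin (r+1)).val : ℚ) - m)) = _
      simp only [Fin.val_zero, Nat.cast_zero, sub_zero]
      exact ffac_self rho
    have h1 : fSYT ga0 = 1 := by
      unfold fSYT
      rw [hsum0]
      have hmat : (fun i j : Fin (r+1) => rfac ((ga0 i : ℤ) + (j.val : ℤ) - (i.val : ℤ)))
          = fun i j : Fin (r+1) =>
            rfac (((if i = (0 : Fin (r+1)) then rho else 0 : ℕ) : ℤ) + (j.val : ℤ) - (i.val : ℤ)) := by
        funext i j
        simp [ga0]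
      rw [hmat, det_Mrow r rho]
      exact mul_inv_cancel₀ (Nat.cast_ne_zero.2 (Nat.factorial_ne_zero _))
    have h2 : fSYT (fun i => 1 + ga0 i) = ((r + rho).choose rho : ℚ) := by
      unfold fSYT
      have hsum : ∑ i : Fin (r+1), (1 + ga0 i) = rho + r + 1 := by
        rw [Finset.sum_add_distrib, hsum0]
        simp
        omega
      have hmat : (fun i j : Fin (r+1) => rfac (((1 + ga0 i : ℕ) : ℤ) + (j.val : ℤ) - (i.val : ℤ)))
          = Mhook r rho := by
        funext i j
        unfold Mhook
        have hval : ((1 + ga0 i : ℕ) : ℤ) = (if i.val = 0 then (rho:ℤ)+1 else 1) := by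
          by_cases hi : i = 0
          · subst hi
            simp [ga0]
            ring
          · have hv : i.val ≠ 0 := fun h => hi (Fin.ext (by simpa using h))
            rw [if_neg hv]
            simp [ga0, hi]
        rw [hval]
      rw [hsum, hmat, det_Mhook r rho]
      have hcc : (rho + r).choose r = (r + rho).choose rho := by
        rw [add_comm rho r]
        rw [← Nat.choose_symm (Nat.le_add_right r rho)]
        congr 1
        omega
      rw [hcc]
      rw [div_eq_inv_mul, ← mul_assoc, mul_inv_cancel₀
        (Nat.cast_ne_zero.2 (Nat.factorial_ne_zero _)), one_mul]
    rw [h1, hprod, h2, one_mul, one_div, ← mul_assoc,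
      inv_mul_cancel₀ (Nat.cast_ne_zero.2 (Nat.factorial_ne_zero _)), one_mul]
  · -- other terms vanish
    rw [Finset.mem_filter, Finset.Nat.mem_antidiagonalTuple] at hb
    obtain ⟨hbsum, hbanti⟩ := hb
    have hex : ∃ i : Fin (r+1), 1 ≤ i.val ∧ 1 ≤ b i := by
      by_contra h
      push_neg at h
      apply hbne
      have hzero : ∀ i : Fin (r+1), i ≠ 0 → b i = 0 := by
        intro i hi
        have hv : i.val ≠ 0 := fun hv => hi (Fin.ext hv)
        have := h i (by omega)
        omega
      have hb0 : b 0 = rho := by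
        rw [← hbsum, Fin.sum_univ_succ,
          Finset.sum_eq_zero (fun i _ => hzero i.succ (Fin.succ_ne_zero i)), add_zero]
      funext i
      by_cases hi : i = 0
      · subst hi; simp [ga0, hb0]
      · simp [ga0, hi, hzero i hi]
    rw [part1 b hbanti hbsum hex]
    ring
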